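/- For every δ ∈ (0,1), every maximizer x* ∈ [0,1] of x ↦ Π^D(x,δ) satisfies x* > p₀, where p₀ ∈ (0,1) is the unique maximizer of p ↦ (1−F(p))·(p−μ) (equivalently, the unique solution of ψ(p₀) = μ). -/

import Mathlib

open MeasureTheory

/-- `F(x) = ∫₀^x f`, with the convention that it is `0` for `x ≤ 0`. -/
noncomputable def cdf (f : ℝ → ℝ) (x : ℝ) : ℝ := ∫ t in Set.Ioc (0:ℝ) x, f t

/-- `𝒢(x) = ∫₀^x G(y) dy`, the left-hand integral of the cdf of `g` (`= 0` for `x ≤ 0`). -/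
noncomputable def calG (g : ℝ → ℝ) (x : ℝ) : ℝ := ∫ y in Set.Ioc (0:ℝ) x, cdf g y

/-- `μ = ∫₀¹ ω g(ω) dω`, the mean cost. -/
noncomputable def muG (g : ℝ → ℝ) : ℝ := ∫ t in Set.Ioc (0:ℝ) 1, t * g t

/-- The virtual valuation `ψ(θ) = θ − (1 − F(θ))/f(θ)`. -/
noncomputable def psi (f : ℝ → ℝ) (θ : ℝ) : ℝ := θ - (1 - cdf f θ) / f θ

/-- The truncated virtual valuation `ψ(θ,x) = θ − (F(x) − F(θ))/f(θ)`. -/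
noncomputable def psiT (f : ℝ → ℝ) (x θ : ℝ) : ℝ := θ - (cdf f x - cdf f θ) / f θ

/-- The dynamic-mechanism profit
`Π^D(x,δ) = (1−F(x))·(x − δ·∫_{θ**(x)}^x G(ψ(θ,x)) dθ − μ) + δ·∫_{θ**(x)}^x 𝒢(ψ(θ,x)) f(θ) dθ`
for `x ∈ (0,1]`, with `Π^D(0,δ) = −μ`; here `θss` is the map `x ↦ θ**(x)`. -/
noncomputable def PiD (f g : ℝ → ℝ) (θss : ℝ → ℝ) (x δ : ℝ) : ℝ :=
  if x = 0 then -(muG g)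
  else (1 - cdf f x) * (x - δ * (∫ θ in (θss x)..x, cdf g (psiT f x θ)) - muG g)
    + δ * ∫ θ in (θss x)..x, calG g (psiT f x θ) * f θ

open Set intervalIntegral

section API
variable {f : ℝ → ℝ}

lemma cdf_of_nonpos (f : ℝ → ℝ) {y : ℝ} (hy : y ≤ 0) : cdf f y = 0 := by
  simp [cdf, Set.Ioc_eq_empty (not_lt.mpr hy)]

lemma cdf_eq_ii (f : ℝ → ℝ) {y : ℝ} (hy : 0 ≤ y) :
    cdf f y = ∫ t in (0:ℝ)..y, f t := (intervalIntegral.integral_of_le hy).symm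

lemma ii_sub (hf_int : IntegrableOn f (Icc 0 1)) {a b : ℝ} (h0 : 0 ≤ a) (hb : b ≤ 1)
    (hab : a ≤ b) : IntervalIntegrable f volume a b := by
  apply MeasureTheory.IntegrableOn.intervalIntegrable
  rw [uIcc_of_le hab]
  exact hf_int.mono_set (Icc_subset_Icc h0 hb)

lemma cdf_sub (hf_int : IntegrableOn f (Icc 0 1)) {a b : ℝ} (h0 : 0 ≤ a) (hab : a ≤ b)
    (hb : b ≤ 1) : cdf f b - cdf f a = ∫ t in a..b, f t := by
  rw [cdf_eq_ii f h0, cdf_eq_ii f (h0.trans hab),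
    ← intervalIntegral.integral_add_adjacent_intervals
      (ii_sub hf_int le_rfl (hab.trans hb) h0) (ii_sub hf_int h0 hb hab)]
  ring

lemma cdf_nonneg (hf_nonneg : ∀ t ∈ Icc (0:ℝ) 1, 0 ≤ f t) {y : ℝ} (hy : y ≤ 1) :
    0 ≤ cdf f y := by
  rcases le_or_gt y 0 with h | h
  · rw [cdf_of_nonpos f h]
  · rw [cdf_eq_ii f h.le]
    exact intervalIntegral.integral_nonneg h.le
      (fun u hu => hf_nonneg u ⟨hu.1, hu.2.trans hy⟩)

lemma cdf_mono (hf_int : IntegrableOn f (Icc 0 1))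
    (hf_nonneg : ∀ t ∈ Icc (0:ℝ) 1, 0 ≤ f t) {a b : ℝ} (hab : a ≤ b) (hb : b ≤ 1) :
    cdf f a ≤ cdf f b := by
  rcases le_or_gt a 0 with h | h
  · rw [cdf_of_nonpos f h]; exact cdf_nonneg hf_nonneg hb
  · have := cdf_sub hf_int h.le hab hb
    have h2 : 0 ≤ ∫ t in a..b, f t :=
      intervalIntegral.integral_nonneg hab (fun u hu => hf_nonneg u ⟨h.le.trans hu.1, hu.2.trans hb⟩)
    linarith

lemma cdf_le_one (hf_int : IntegrableOn f (Icc 0 1))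
    (hf_nonneg : ∀ t ∈ Icc (0:ℝ) 1, 0 ≤ f t) (hf_one : cdf f 1 = 1) {y : ℝ} (hy : y ≤ 1) :
    cdf f y ≤ 1 := hf_one ▸ cdf_mono hf_int hf_nonneg hy le_rfl

lemma cdf_lt (hf_int : IntegrableOn f (Icc 0 1)) (hf_cont : ContinuousOn f (Icc 0 1))
    (hf_pos : ∀ t ∈ Icc (0:ℝ) 1, 0 < f t) {a b : ℝ} (h0 : 0 ≤ a) (hab : a < b) (hb : b ≤ 1) :
    cdf f a < cdf f b := by
  have := cdf_sub hf_int h0 hab.le hb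
  have h2 : 0 < ∫ t in a..b, f t := by
    apply intervalIntegral.intervalIntegral_pos_of_pos_on (ii_sub hf_int h0 hb hab.le)
    · exact fun x hx => hf_pos x ⟨h0.trans hx.1.le, hx.2.le.trans hb⟩
    · exact hab
  linarith

lemma cdf_continuousOn (hf_int : IntegrableOn f (Icc 0 1)) :
    ContinuousOn (cdf f) (Icc 0 1) :=
  intervalIntegral.continuousOn_primitive hf_int

lemma cdf_continuousOn_Iic (hf_int : IntegrableOn f (Icc 0 1)) :
    ContinuousOn (cdf f) (Iic 1) := by
  have h1 : ContinuousOn (fun y => cdf f (max 0 y)) (Iic 1) := by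
    apply (cdf_continuousOn hf_int).comp
      ((continuous_const.max continuous_id).continuousOn)
    exact fun y hy => ⟨le_max_left _ _, max_le zero_le_one hy⟩
  apply h1.congr
  intro y hy
  simp only []
  rcases le_or_gt y 0 with h | h
  · rw [show (0:ℝ) ⊔ y = 0 from max_eq_left h, cdf_of_nonpos f h, cdf_of_nonpos f le_rfl]
  · rw [show (0:ℝ) ⊔ y = y from max_eq_right h.le]

end API

section API2
variable {g : ℝ → ℝ}

lemma calG_eq_cdf (g : ℝ → ℝ) : calG g = cdf (cdf g) := rfl

lemma cdfg_int (hg_int : IntegrableOn g (Icc 0 1)) : IntegrableOn (cdf g) (Icc 0 1) :=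
  (cdf_continuousOn hg_int).integrableOn_Icc

lemma calG_of_nonpos (g : ℝ → ℝ) {y : ℝ} (hy : y ≤ 0) : calG g y = 0 := cdf_of_nonpos _ hy

lemma calG_nonneg (hg_int : IntegrableOn g (Icc 0 1))
    (hg_nonneg : ∀ t ∈ Icc (0:ℝ) 1, 0 ≤ g t) {y : ℝ} (hy : y ≤ 1) : 0 ≤ calG g y :=
  cdf_nonneg (f := cdf g) (fun t ht => cdf_nonneg hg_nonneg ht.2) hy

lemma calG_sub_le (hg_int : IntegrableOn g (Icc 0 1))
    (hg_nonneg : ∀ t ∈ Icc (0:ℝ) 1, 0 ≤ g t) {a b : ℝ} (h0 : 0 ≤ a) (hab : a ≤ b)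
    (hb : b ≤ 1) : calG g b - calG g a ≤ (b - a) * cdf g b := by
  rw [calG_eq_cdf, cdf_sub (cdfg_int hg_int) h0 hab hb]
  have h1 : (∫ y in a..b, cdf g y) ≤ ∫ _ in a..b, cdf g b := by
    apply intervalIntegral.integral_mono_on hab
    · exact ii_sub (cdfg_int hg_int) h0 hb hab
    · exact intervalIntegrable_const
    · exact fun y hy => cdf_mono hg_int hg_nonneg hy.2 hb
  simpa using h1

lemma calG_lower (hg_int : IntegrableOn g (Icc 0 1))
    (hg_nonneg : ∀ t ∈ Icc (0:ℝ) 1, 0 ≤ g t) {u v : ℝ} (huv : u ≤ v) (hv : v ≤ 1) :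
    calG g v - (v - u) * cdf g v ≤ calG g u := by
  rcases le_or_gt v 0 with h | h
  · rw [calG_of_nonpos g h, calG_of_nonpos g (huv.trans h), cdf_of_nonpos g h]
    simp
  · rcases le_or_gt u 0 with h2 | h2
    · rw [calG_of_nonpos g h2]
      have h3 := calG_sub_le hg_int hg_nonneg le_rfl h.le hv
      rw [calG_of_nonpos g le_rfl] at h3
      have h4 : (v - 0) * cdf g v ≤ (v - u) * cdf g v := by
        apply mul_le_mul_of_nonneg_right (by linarith) (cdf_nonneg hg_nonneg hv)
      linarith
    · have := calG_sub_le hg_int hg_nonneg h2.le huv hv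
      linarith

lemma calG_continuousOn_Iic (hg_int : IntegrableOn g (Icc 0 1)) :
    ContinuousOn (calG g) (Iic 1) := cdf_continuousOn_Iic (cdfg_int hg_int)

/-- `μ = 1 - 𝒢(1)` (integration by parts). -/
lemma muG_eq (hg_int : IntegrableOn g (Icc 0 1)) (hg_cont : ContinuousOn g (Icc 0 1))
    (hg_one : cdf g 1 = 1) : muG g = 1 - calG g 1 := by
  have hii : IntervalIntegrable g volume 0 1 := ii_sub hg_int le_rfl le_rfl zero_le_one
  -- T t := t * cdf g t ; T' t = cdf g t + t * g t on (0,1)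
  have hderiv : ∀ t ∈ Ioo (0:ℝ) 1, HasDerivAt (fun y => y * cdf g y) (cdf g t + t * g t) t := by
    intro t ht
    have hI : HasDerivAt (fun u => ∫ s in (0:ℝ)..u, g s) (g t) t := by
      apply intervalIntegral.integral_hasDerivAt_right
        (ii_sub hg_int le_rfl ht.2.le ht.1.le)
      · exact (hg_cont.mono Ioo_subset_Icc_self).stronglyMeasurableAtFilter isOpen_Ioo t ht
      · exact hg_cont.continuousAt (Icc_mem_nhds ht.1 ht.2)
    have hc : HasDerivAt (cdf g) (g t) t := by
      apply hI.congr_of_eventuallyEq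
      filter_upwards [Ioi_mem_nhds ht.1] with y hy
      exact cdf_eq_ii g (le_of_lt hy)
    have : HasDerivAt (fun y => y * cdf g y) _ t := (hasDerivAt_id t).mul hc
    convert this using 1
    simp [id, mul_comm]
  have hcont : ContinuousOn (fun y => y * cdf g y) (Icc 0 1) :=
    continuousOn_id.mul (cdf_continuousOn hg_int)
  have hmul : IntervalIntegrable (fun t => t * g t) volume 0 1 :=
    hii.continuousOn_mul continuousOn_id
  have hint : IntervalIntegrable (fun t => cdf g t + t * g t) volume 0 1 :=
    (ii_sub (cdfg_int hg_int) le_rfl le_rfl zero_le_one).add hmul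
  have hftc : (∫ t in (0:ℝ)..1, (cdf g t + t * g t)) = 1 * cdf g 1 - 0 * cdf g 0 := by
    apply intervalIntegral.integral_eq_sub_of_hasDeriv_right_of_le zero_le_one hcont
      (fun t ht => (hderiv t ht).hasDerivWithinAt) hint
  have hsplit : (∫ t in (0:ℝ)..1, (cdf g t + t * g t))
      = (∫ t in (0:ℝ)..1, cdf g t) + ∫ t in (0:ℝ)..1, t * g t := by
    exact intervalIntegral.integral_add (ii_sub (cdfg_int hg_int) le_rfl le_rfl zero_le_one) hmul
  have h1 : (∫ t in (0:ℝ)..1, cdf g t) = calG g 1 := (cdf_eq_ii (cdf g) zero_le_one).symm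
  have h2 : (∫ t in (0:ℝ)..1, t * g t) = muG g := (cdf_eq_ii (fun t => t * g t) zero_le_one).symm
  rw [hsplit, h1, h2, hg_one] at hftc
  linarith

end API2

section API3
variable {f g : ℝ → ℝ}

lemma psiT_contOn (hf_int : IntegrableOn f (Icc 0 1)) (hf_cont : ContinuousOn f (Icc 0 1))
    (hf_pos : ∀ t ∈ Icc (0:ℝ) 1, 0 < f t) (x : ℝ) :
    ContinuousOn (psiT f x) (Icc 0 1) := by
  unfold psiT
  exact continuousOn_id.sub ((continuousOn_const.sub (cdf_continuousOn hf_int)).div hf_cont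
    (fun θ hθ => ne_of_gt (hf_pos θ hθ)))

lemma psi_contOn (hf_int : IntegrableOn f (Icc 0 1)) (hf_cont : ContinuousOn f (Icc 0 1))
    (hf_pos : ∀ t ∈ Icc (0:ℝ) 1, 0 < f t) :
    ContinuousOn (psi f) (Icc 0 1) := by
  unfold psi
  exact continuousOn_id.sub ((continuousOn_const.sub (cdf_continuousOn hf_int)).div hf_cont
    (fun θ hθ => ne_of_gt (hf_pos θ hθ)))

lemma psiT_le (hf_int : IntegrableOn f (Icc 0 1))
    (hf_nonneg : ∀ t ∈ Icc (0:ℝ) 1, 0 ≤ f t)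
    (hf_pos : ∀ t ∈ Icc (0:ℝ) 1, 0 < f t) {x θ : ℝ} (hθ : θ ∈ Icc 0 x) (hx : x ≤ 1) :
    psiT f x θ ≤ θ := by
  have h1 : cdf f θ ≤ cdf f x := cdf_mono hf_int hf_nonneg hθ.2 hx
  have h2 : 0 < f θ := hf_pos θ ⟨hθ.1, hθ.2.trans hx⟩
  have : 0 ≤ (cdf f x - cdf f θ) / f θ := div_nonneg (by linarith) h2.le
  simp only [psiT]; linarith

lemma psiT_anti (hf_int : IntegrableOn f (Icc 0 1))
    (hf_nonneg : ∀ t ∈ Icc (0:ℝ) 1, 0 ≤ f t)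
    (hf_pos : ∀ t ∈ Icc (0:ℝ) 1, 0 < f t) {x₁ x₂ θ : ℝ} (hθ : θ ∈ Icc 0 1)
    (h12 : x₁ ≤ x₂) (h2 : x₂ ≤ 1) : psiT f x₂ θ ≤ psiT f x₁ θ := by
  have h1 : cdf f x₁ ≤ cdf f x₂ := cdf_mono hf_int hf_nonneg h12 h2
  have h2 : 0 < f θ := hf_pos θ hθ
  simp only [psiT]
  have : (cdf f x₁ - cdf f θ) / f θ ≤ (cdf f x₂ - cdf f θ) / f θ := by
    gcongr
  linarith

lemma psiT_gap (hf_pos : ∀ t ∈ Icc (0:ℝ) 1, 0 < f t) {x θ : ℝ} (hθ : θ ∈ Icc 0 1) :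
    f θ * (θ - psiT f x θ) = cdf f x - cdf f θ := by
  have h2 : f θ ≠ 0 := ne_of_gt (hf_pos θ hθ)
  simp only [psiT]
  field_simp
  ring

lemma psi_expand (hf_pos : ∀ t ∈ Icc (0:ℝ) 1, 0 < f t) {θ : ℝ} (hθ : θ ∈ Icc 0 1) (μ : ℝ) :
    f θ * (μ - psi f θ) = f θ * (μ - θ) + (1 - cdf f θ) := by
  have h2 : f θ ≠ 0 := ne_of_gt (hf_pos θ hθ)
  simp only [psi]
  field_simp
  ring

lemma psiT_strictMono (hpsiT_deriv : ∀ x ∈ Set.Ioc (0:ℝ) 1, ∃ d : ℝ → ℝ,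
      ContinuousOn d (Set.Icc 0 x) ∧
      ∀ θ ∈ Set.Icc (0:ℝ) x, 0 < d θ ∧ HasDerivWithinAt (psiT f x) (d θ) (Set.Icc 0 x) θ)
    {x : ℝ} (hx : x ∈ Ioc 0 1) : StrictMonoOn (psiT f x) (Icc 0 x) := by
  obtain ⟨d, _, hd⟩ := hpsiT_deriv x hx
  apply strictMonoOn_of_deriv_pos (convex_Icc 0 x)
    (fun θ hθ => (hd θ hθ).2.continuousWithinAt)
  intro θ hθ
  rw [interior_Icc] at hθ
  have h1 := hd θ ⟨hθ.1.le, hθ.2.le⟩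
  have h2 : HasDerivAt (psiT f x) (d θ) θ := h1.2.hasDerivAt (Icc_mem_nhds hθ.1 hθ.2)
  rw [h2.deriv]; exact h1.1

end API3

section API4
variable {f g : ℝ → ℝ}

/-- Continuity of `θ ↦ G(ψ(θ,x))` on `[0,x]`. -/
lemma contA (hf_int : IntegrableOn f (Icc 0 1)) (hf_cont : ContinuousOn f (Icc 0 1))
    (hf_nonneg : ∀ t ∈ Icc (0:ℝ) 1, 0 ≤ f t)
    (hf_pos : ∀ t ∈ Icc (0:ℝ) 1, 0 < f t) (hg_int : IntegrableOn g (Icc 0 1))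
    {x : ℝ} (hx : x ≤ 1) :
    ContinuousOn (fun θ => cdf g (psiT f x θ)) (Icc 0 x) := by
  apply (cdf_continuousOn_Iic hg_int).comp
    ((psiT_contOn hf_int hf_cont hf_pos x).mono (Icc_subset_Icc le_rfl hx))
  intro θ hθ
  exact le_trans (psiT_le hf_int hf_nonneg hf_pos hθ hx) (hθ.2.trans hx)

/-- Continuity of `θ ↦ 𝒢(ψ(θ,x)) f(θ)` on `[0,x]`. -/
lemma contB (hf_int : IntegrableOn f (Icc 0 1)) (hf_cont : ContinuousOn f (Icc 0 1))
    (hf_nonneg : ∀ t ∈ Icc (0:ℝ) 1, 0 ≤ f t)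
    (hf_pos : ∀ t ∈ Icc (0:ℝ) 1, 0 < f t) (hg_int : IntegrableOn g (Icc 0 1))
    {x : ℝ} (hx : x ≤ 1) :
    ContinuousOn (fun θ => calG g (psiT f x θ) * f θ) (Icc 0 x) := by
  apply ContinuousOn.mul ?_ (hf_cont.mono (Icc_subset_Icc le_rfl hx))
  apply (calG_continuousOn_Iic hg_int).comp
    ((psiT_contOn hf_int hf_cont hf_pos x).mono (Icc_subset_Icc le_rfl hx))
  intro θ hθ
  exact le_trans (psiT_le hf_int hf_nonneg hf_pos hθ hx) (hθ.2.trans hx)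

lemma split_int {h : ℝ → ℝ} {c x : ℝ} (hc : c ∈ Icc 0 x)
    (hcont : ContinuousOn h (Icc 0 x)) (hzero : ∀ θ ∈ Icc 0 c, h θ = 0) :
    ∫ θ in c..x, h θ = ∫ θ in (0:ℝ)..x, h θ := by
  have hcx : (0:ℝ) ≤ x := hc.1.trans hc.2
  have i1 : IntervalIntegrable h volume 0 c :=
    ((hcont.mono (Icc_subset_Icc le_rfl hc.2)).intervalIntegrable_of_Icc hc.1)
  have i2 : IntervalIntegrable h volume c x :=
    ((hcont.mono (Icc_subset_Icc hc.1 le_rfl)).intervalIntegrable_of_Icc hc.2)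
  have hz : ∫ θ in (0:ℝ)..c, h θ = 0 := by
    rw [intervalIntegral.integral_congr (g := fun _ => (0:ℝ))
      (by rwa [uIcc_of_le hc.1])]
    simp
  rw [← intervalIntegral.integral_add_adjacent_intervals i1 i2, hz, zero_add]

lemma psiT_nonpos_left
    (hpsiT_deriv : ∀ x ∈ Set.Ioc (0:ℝ) 1, ∃ d : ℝ → ℝ,
      ContinuousOn d (Set.Icc 0 x) ∧
      ∀ θ ∈ Set.Icc (0:ℝ) x, 0 < d θ ∧ HasDerivWithinAt (psiT f x) (d θ) (Set.Icc 0 x) θ)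
    {θss : ℝ → ℝ}
    (hθss : ∀ x ∈ Set.Ioc (0:ℝ) 1, θss x ∈ Set.Ioo 0 x ∧ psiT f x (θss x) = 0)
    {x : ℝ} (hx : x ∈ Ioc 0 1) : ∀ θ ∈ Icc 0 (θss x), psiT f x θ ≤ 0 := by
  intro θ hθ
  obtain ⟨hss, hzero⟩ := hθss x hx
  have hssx : θss x ∈ Icc 0 x := ⟨hss.1.le, hss.2.le⟩
  have hθx : θ ∈ Icc 0 x := ⟨hθ.1, hθ.2.trans hss.2.le⟩
  rcases eq_or_lt_of_le hθ.2 with h | h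
  · rw [h, hzero]
  · have := psiT_strictMono hpsiT_deriv hx hθx hssx h
    rw [hzero] at this
    exact this.le

/-- `Π^D` in terms of integrals over `0..x`. -/
lemma PiD_eq (hf_int : IntegrableOn f (Icc 0 1)) (hf_cont : ContinuousOn f (Icc 0 1))
    (hf_nonneg : ∀ t ∈ Icc (0:ℝ) 1, 0 ≤ f t)
    (hf_pos : ∀ t ∈ Icc (0:ℝ) 1, 0 < f t) (hg_int : IntegrableOn g (Icc 0 1))
    (hpsiT_deriv : ∀ x ∈ Set.Ioc (0:ℝ) 1, ∃ d : ℝ → ℝ,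
      ContinuousOn d (Set.Icc 0 x) ∧
      ∀ θ ∈ Set.Icc (0:ℝ) x, 0 < d θ ∧ HasDerivWithinAt (psiT f x) (d θ) (Set.Icc 0 x) θ)
    {θss : ℝ → ℝ}
    (hθss : ∀ x ∈ Set.Ioc (0:ℝ) 1, θss x ∈ Set.Ioo 0 x ∧ psiT f x (θss x) = 0)
    {x : ℝ} (hx : x ∈ Ioc 0 1) (δ : ℝ) :
    PiD f g θss x δ = (1 - cdf f x) * (x - muG g)
      - δ * ((1 - cdf f x) * (∫ θ in (0:ℝ)..x, cdf g (psiT f x θ)))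
      + δ * ∫ θ in (0:ℝ)..x, calG g (psiT f x θ) * f θ := by
  have hss : θss x ∈ Icc 0 x := ⟨(hθss x hx).1.1.le, (hθss x hx).1.2.le⟩
  have hnp := psiT_nonpos_left hpsiT_deriv hθss hx
  have e1 : ∫ θ in (θss x)..x, cdf g (psiT f x θ) = ∫ θ in (0:ℝ)..x, cdf g (psiT f x θ) :=
    split_int hss (contA hf_int hf_cont hf_nonneg hf_pos hg_int hx.2)
      (fun θ hθ => cdf_of_nonpos g (hnp θ hθ))
  have e2 : ∫ θ in (θss x)..x, calG g (psiT f x θ) * f θ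
      = ∫ θ in (0:ℝ)..x, calG g (psiT f x θ) * f θ :=
    split_int hss (contB hf_int hf_cont hf_nonneg hf_pos hg_int hx.2)
      (fun θ hθ => by rw [calG_of_nonpos g (hnp θ hθ), zero_mul])
  rw [PiD, if_neg (ne_of_gt hx.1), e1, e2]
  ring

end API4

section API5
variable {f : ℝ → ℝ}

lemma cdf_hasDerivAt (hf_int : IntegrableOn f (Icc 0 1))
    (hf_cont : ContinuousOn f (Icc 0 1)) {θ : ℝ} (hθ : θ ∈ Ioo (0:ℝ) 1) :
    HasDerivAt (cdf f) (f θ) θ := by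
  have hI : HasDerivAt (fun u => ∫ s in (0:ℝ)..u, f s) (f θ) θ := by
    apply intervalIntegral.integral_hasDerivAt_right
      (ii_sub hf_int le_rfl hθ.2.le hθ.1.le)
    · exact (hf_cont.mono Ioo_subset_Icc_self).stronglyMeasurableAtFilter isOpen_Ioo θ hθ
    · exact hf_cont.continuousAt (Icc_mem_nhds hθ.1 hθ.2)
  apply hI.congr_of_eventuallyEq
  filter_upwards [Ioi_mem_nhds hθ.1] with y hy
  exact cdf_eq_ii f (le_of_lt hy)

/-- FTC identity for the static profit. -/
lemma Pis_sub (hf_int : IntegrableOn f (Icc 0 1)) (hf_cont : ContinuousOn f (Icc 0 1))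
    (hf_pos : ∀ t ∈ Icc (0:ℝ) 1, 0 < f t) {a b : ℝ} (h0 : 0 ≤ a) (hab : a ≤ b)
    (hb : b ≤ 1) (μ : ℝ) :
    (1 - cdf f b) * (b - μ) - (1 - cdf f a) * (a - μ)
      = ∫ θ in a..b, f θ * (μ - psi f θ) := by
  have hsub : Icc a b ⊆ Icc (0:ℝ) 1 := Icc_subset_Icc h0 hb
  have hScont : ContinuousOn (fun y => (1 - cdf f y) * (y - μ)) (Icc a b) :=
    (continuousOn_const.sub ((cdf_continuousOn hf_int).mono hsub)).mul
      ((continuous_id.sub continuous_const).continuousOn)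
  have hint : IntervalIntegrable (fun θ => (1 - cdf f θ) - f θ * (θ - μ)) volume a b := by
    apply ContinuousOn.intervalIntegrable_of_Icc hab
    exact (continuousOn_const.sub ((cdf_continuousOn hf_int).mono hsub)).sub
      ((hf_cont.mono hsub).mul ((continuous_id.sub continuous_const).continuousOn))
  have hftc : (∫ θ in a..b, ((1 - cdf f θ) - f θ * (θ - μ)))
      = (1 - cdf f b) * (b - μ) - (1 - cdf f a) * (a - μ) := by
    apply intervalIntegral.integral_eq_sub_of_hasDeriv_right_of_le hab hScont ?_ hint
    intro θ hθ
    have hθ01 : θ ∈ Ioo (0:ℝ) 1 := ⟨h0.trans_lt hθ.1, hθ.2.trans_le hb⟩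
    have hcdf := cdf_hasDerivAt hf_int hf_cont hθ01
    have hS : HasDerivAt (fun y => (1 - cdf f y) * (y - μ))
        ((1 - cdf f θ) - f θ * (θ - μ)) θ := by
      have : HasDerivAt (fun y => (1 - cdf f y) * (y - μ)) _ θ :=
        ((hasDerivAt_const θ (1:ℝ)).sub hcdf).mul ((hasDerivAt_id θ).sub_const μ)
      convert this using 1
      simp [id]
      ring
    exact hS.hasDerivWithinAt
  rw [← hftc]
  apply intervalIntegral.integral_congr
  intro θ hθ
  rw [uIcc_of_le hab] at hθ
  have := psi_expand hf_pos (hsub hθ) μ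
  simp only []
  linarith

end API5

/-- The pointwise lower bound for the marginal value of raising the posted price. -/
noncomputable def Wfun (f g : ℝ → ℝ) (δ θ : ℝ) : ℝ :=
  (1 - δ) * (f θ * (muG g - psi f θ))
    + δ * (f θ * (muG g - θ + calG g θ) + (1 - cdf f θ) * (1 - cdf g θ))

section Master
variable {f g : ℝ → ℝ}

/-- Pointwise key inequality (P). -/
lemma key_ptwise (hf_int : IntegrableOn f (Icc 0 1))
    (hf_nonneg : ∀ t ∈ Icc (0:ℝ) 1, 0 ≤ f t)
    (hf_pos : ∀ t ∈ Icc (0:ℝ) 1, 0 < f t) (hf_one : cdf f 1 = 1)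
    (hg_int : IntegrableOn g (Icc 0 1)) (hg_nonneg : ∀ t ∈ Icc (0:ℝ) 1, 0 ≤ g t)
    {x₂ θ : ℝ} (hθ : θ ∈ Icc 0 x₂) (hx₂ : x₂ ≤ 1) :
    calG g θ * f θ - (1 - cdf f θ) * cdf g θ
      ≤ calG g (psiT f x₂ θ) * f θ - (1 - cdf f x₂) * cdf g (psiT f x₂ θ) := by
  set u := psiT f x₂ θ with hu
  have hθ01 : θ ∈ Icc (0:ℝ) 1 := ⟨hθ.1, hθ.2.trans hx₂⟩
  have hfθ : 0 < f θ := hf_pos θ hθ01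
  have huθ : u ≤ θ := psiT_le hf_int hf_nonneg hf_pos hθ hx₂
  have hθ1 : θ ≤ 1 := hθ01.2
  have hgap : f θ * (θ - u) = cdf f x₂ - cdf f θ := psiT_gap hf_pos hθ01
  -- calG g θ - (θ - u) * cdf g θ ≤ calG g u
  have l1 := calG_lower hg_int hg_nonneg huθ hθ1
  have l1' : calG g θ * f θ - (cdf f x₂ - cdf f θ) * cdf g θ ≤ calG g u * f θ := by
    have h2 := mul_le_mul_of_nonneg_right l1 hfθ.le
    have hg2 : f θ * (θ - u) * cdf g θ = (cdf f x₂ - cdf f θ) * cdf g θ := by rw [hgap]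
    nlinarith [h2, hg2]
  have l2 : (1 - cdf f x₂) * cdf g u ≤ (1 - cdf f x₂) * cdf g θ := by
    apply mul_le_mul_of_nonneg_left (cdf_mono hg_int hg_nonneg huθ hθ1)
    have := cdf_le_one hf_int hf_nonneg hf_one hx₂
    linarith
  nlinarith [l1', l2]

/-- Pointwise domination of `Wfun` on the upper interval. -/
lemma W_le_integrand (hf_int : IntegrableOn f (Icc 0 1))
    (hf_nonneg : ∀ t ∈ Icc (0:ℝ) 1, 0 ≤ f t)
    (hf_pos : ∀ t ∈ Icc (0:ℝ) 1, 0 < f t) (hf_one : cdf f 1 = 1)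
    (hg_int : IntegrableOn g (Icc 0 1)) (hg_nonneg : ∀ t ∈ Icc (0:ℝ) 1, 0 ≤ g t)
    {δ x₂ θ : ℝ} (hδ0 : 0 ≤ δ) (hθ : θ ∈ Icc 0 x₂) (hx₂ : x₂ ≤ 1) :
    Wfun f g δ θ ≤ f θ * (muG g - psi f θ)
      + δ * (calG g (psiT f x₂ θ) * f θ - (1 - cdf f x₂) * cdf g (psiT f x₂ θ)) := by
  have hθ01 : θ ∈ Icc (0:ℝ) 1 := ⟨hθ.1, hθ.2.trans hx₂⟩
  have hexp := psi_expand hf_pos hθ01 (muG g)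
  have hP := key_ptwise hf_int hf_nonneg hf_pos hf_one hg_int hg_nonneg hθ hx₂
  have e1 : Wfun f g δ θ = f θ * (muG g - psi f θ)
      + δ * (calG g θ * f θ - (1 - cdf f θ) * cdf g θ) := by
    simp only [Wfun]
    linear_combination (-δ) * hexp
  rw [e1]
  exact add_le_add_right (mul_le_mul_of_nonneg_left hP hδ0) _

end Master

section Master2
variable {f g : ℝ → ℝ}

lemma Wfun_contOn (hf_int : IntegrableOn f (Icc 0 1)) (hf_cont : ContinuousOn f (Icc 0 1))
    (hf_pos : ∀ t ∈ Icc (0:ℝ) 1, 0 < f t) (hg_int : IntegrableOn g (Icc 0 1)) (δ : ℝ) :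
    ContinuousOn (Wfun f g δ) (Icc 0 1) := by
  have h1 : Icc (0:ℝ) 1 ⊆ Iic 1 := fun t ht => ht.2
  apply ContinuousOn.add
  · exact continuousOn_const.mul (hf_cont.mul
      (continuousOn_const.sub (psi_contOn hf_int hf_cont hf_pos)))
  · apply continuousOn_const.mul
    apply ContinuousOn.add
    · exact hf_cont.mul (((continuousOn_const.sub continuous_id.continuousOn).add
        ((calG_continuousOn_Iic hg_int).mono h1)))
    · exact (continuousOn_const.sub (cdf_continuousOn hf_int)).mul
        (continuousOn_const.sub ((cdf_continuousOn_Iic hg_int).mono h1))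

lemma master (hf_int : IntegrableOn f (Icc 0 1)) (hf_cont : ContinuousOn f (Icc 0 1))
    (hf_nonneg : ∀ t ∈ Icc (0:ℝ) 1, 0 ≤ f t)
    (hf_pos : ∀ t ∈ Icc (0:ℝ) 1, 0 < f t) (hf_one : cdf f 1 = 1)
    (hg_int : IntegrableOn g (Icc 0 1)) (hg_nonneg : ∀ t ∈ Icc (0:ℝ) 1, 0 ≤ g t)
    (hpsiT_deriv : ∀ x ∈ Set.Ioc (0:ℝ) 1, ∃ d : ℝ → ℝ,
      ContinuousOn d (Set.Icc 0 x) ∧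
      ∀ θ ∈ Set.Icc (0:ℝ) x, 0 < d θ ∧ HasDerivWithinAt (psiT f x) (d θ) (Set.Icc 0 x) θ)
    {θss : ℝ → ℝ}
    (hθss : ∀ x ∈ Set.Ioc (0:ℝ) 1, θss x ∈ Set.Ioo 0 x ∧ psiT f x (θss x) = 0)
    {δ x₁ x₂ : ℝ} (hδ0 : 0 ≤ δ) (h1 : 0 < x₁) (h12 : x₁ ≤ x₂) (h2 : x₂ ≤ 1) :
    PiD f g θss x₁ δ + (∫ θ in x₁..x₂, Wfun f g δ θ) ≤ PiD f g θss x₂ δ := by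
  have hx₁ : x₁ ∈ Ioc (0:ℝ) 1 := ⟨h1, h12.trans h2⟩
  have hx₂ : x₂ ∈ Ioc (0:ℝ) 1 := ⟨h1.trans_le h12, h2⟩
  have hx₁1 : x₁ ≤ 1 := h12.trans h2
  have hsub01 : Icc (0:ℝ) x₁ ⊆ Icc (0:ℝ) x₂ := Icc_subset_Icc le_rfl h12
  have hsub02 : Icc x₁ x₂ ⊆ Icc (0:ℝ) x₂ := Icc_subset_Icc h1.le le_rfl
  -- continuity of integrands
  have cA2 := contA hf_int hf_cont hf_nonneg hf_pos hg_int (g := g) h2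
  have cB2 := contB hf_int hf_cont hf_nonneg hf_pos hg_int (g := g) h2
  have cA1 := contA hf_int hf_cont hf_nonneg hf_pos hg_int (g := g) hx₁1
  have cB1 := contB hf_int hf_cont hf_nonneg hf_pos hg_int (g := g) hx₁1
  have iA2L : IntervalIntegrable (fun θ => cdf g (psiT f x₂ θ)) volume 0 x₁ :=
    (cA2.mono hsub01).intervalIntegrable_of_Icc h1.le
  have iA2M : IntervalIntegrable (fun θ => cdf g (psiT f x₂ θ)) volume x₁ x₂ :=
    (cA2.mono hsub02).intervalIntegrable_of_Icc h12
  have iB2L : IntervalIntegrable (fun θ => calG g (psiT f x₂ θ) * f θ) volume 0 x₁ :=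
    (cB2.mono hsub01).intervalIntegrable_of_Icc h1.le
  have iB2M : IntervalIntegrable (fun θ => calG g (psiT f x₂ θ) * f θ) volume x₁ x₂ :=
    (cB2.mono hsub02).intervalIntegrable_of_Icc h12
  have iA1 : IntervalIntegrable (fun θ => cdf g (psiT f x₁ θ)) volume 0 x₁ :=
    cA1.intervalIntegrable_of_Icc h1.le
  have iB1 : IntervalIntegrable (fun θ => calG g (psiT f x₁ θ) * f θ) volume 0 x₁ :=
    cB1.intervalIntegrable_of_Icc h1.le
  -- splits
  have hAsplit : (∫ θ in (0:ℝ)..x₂, cdf g (psiT f x₂ θ))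
      = (∫ θ in (0:ℝ)..x₁, cdf g (psiT f x₂ θ)) + ∫ θ in x₁..x₂, cdf g (psiT f x₂ θ) :=
    (intervalIntegral.integral_add_adjacent_intervals iA2L iA2M).symm
  have hBsplit : (∫ θ in (0:ℝ)..x₂, calG g (psiT f x₂ θ) * f θ)
      = (∫ θ in (0:ℝ)..x₁, calG g (psiT f x₂ θ) * f θ)
        + ∫ θ in x₁..x₂, calG g (psiT f x₂ θ) * f θ :=
    (intervalIntegral.integral_add_adjacent_intervals iB2L iB2M).symm
  -- static profit identity
  have hPis := Pis_sub hf_int hf_cont hf_pos h1.le h12 h2 (muG g)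
  -- i1
  have i1 : (∫ θ in (0:ℝ)..x₁, cdf g (psiT f x₂ θ))
      ≤ ∫ θ in (0:ℝ)..x₁, cdf g (psiT f x₁ θ) := by
    apply intervalIntegral.integral_mono_on h1.le iA2L iA1
    intro θ hθ
    have hθ01 : θ ∈ Icc (0:ℝ) 1 := ⟨hθ.1, hθ.2.trans hx₁1⟩
    apply cdf_mono hg_int hg_nonneg (psiT_anti hf_int hf_nonneg hf_pos hθ01 h12 h2)
    exact le_trans (psiT_le hf_int hf_nonneg hf_pos hθ hx₁1) hθ01.2
  -- i2
  have i2 : (∫ θ in (0:ℝ)..x₁, calG g (psiT f x₁ θ) * f θ)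
        - (cdf f x₂ - cdf f x₁) * (∫ θ in (0:ℝ)..x₁, cdf g (psiT f x₁ θ))
      ≤ ∫ θ in (0:ℝ)..x₁, calG g (psiT f x₂ θ) * f θ := by
    have hmono : (∫ θ in (0:ℝ)..x₁, (calG g (psiT f x₁ θ) * f θ
          - (cdf f x₂ - cdf f x₁) * cdf g (psiT f x₁ θ)))
        ≤ ∫ θ in (0:ℝ)..x₁, calG g (psiT f x₂ θ) * f θ := by
      apply intervalIntegral.integral_mono_on h1.le (iB1.sub (iA1.const_mul _)) iB2L
      intro θ hθ
      have hθ01 : θ ∈ Icc (0:ℝ) 1 := ⟨hθ.1, hθ.2.trans hx₁1⟩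
      have hfθ : 0 < f θ := hf_pos θ hθ01
      have hv1 : psiT f x₁ θ ≤ 1 := le_trans (psiT_le hf_int hf_nonneg hf_pos hθ hx₁1) hθ01.2
      have huv : psiT f x₂ θ ≤ psiT f x₁ θ := psiT_anti hf_int hf_nonneg hf_pos hθ01 h12 h2
      have hl := mul_le_mul_of_nonneg_right (calG_lower hg_int hg_nonneg huv hv1) hfθ.le
      have g1 := psiT_gap hf_pos hθ01 (x := x₁)
      have g2 := psiT_gap hf_pos hθ01 (x := x₂)
      have hsub : f θ * (psiT f x₁ θ - psiT f x₂ θ) * cdf g (psiT f x₁ θ)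
          = (cdf f x₂ - cdf f x₁) * cdf g (psiT f x₁ θ) := by
        linear_combination cdf g (psiT f x₁ θ) * g2 - cdf g (psiT f x₁ θ) * g1
      nlinarith [hl, hsub]
    have heq : (∫ θ in (0:ℝ)..x₁, (calG g (psiT f x₁ θ) * f θ
          - (cdf f x₂ - cdf f x₁) * cdf g (psiT f x₁ θ)))
        = (∫ θ in (0:ℝ)..x₁, calG g (psiT f x₁ θ) * f θ)
          - (cdf f x₂ - cdf f x₁) * (∫ θ in (0:ℝ)..x₁, cdf g (psiT f x₁ θ)) := by
      rw [intervalIntegral.integral_sub iB1 (iA1.const_mul _),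
        intervalIntegral.integral_const_mul]
    linarith [hmono, heq.symm.le, heq.le]
  -- i3/i4
  have cS : ContinuousOn (fun θ => f θ * (muG g - psi f θ)) (Icc x₁ x₂) :=
    (hf_cont.mono (Icc_subset_Icc h1.le h2)).mul (continuousOn_const.sub
      ((psi_contOn hf_int hf_cont hf_pos).mono (Icc_subset_Icc h1.le h2)))
  have iS : IntervalIntegrable (fun θ => f θ * (muG g - psi f θ)) volume x₁ x₂ :=
    cS.intervalIntegrable_of_Icc h12
  have iRHS : IntervalIntegrable (fun θ => f θ * (muG g - psi f θ)
      + δ * (calG g (psiT f x₂ θ) * f θ - (1 - cdf f x₂) * cdf g (psiT f x₂ θ)))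
      volume x₁ x₂ :=
    iS.add ((iB2M.sub (iA2M.const_mul _)).const_mul _)
  have iW : IntervalIntegrable (Wfun f g δ) volume x₁ x₂ :=
    ((Wfun_contOn hf_int hf_cont hf_pos hg_int δ).mono
      (Icc_subset_Icc h1.le h2)).intervalIntegrable_of_Icc h12
  have i3 : (∫ θ in x₁..x₂, Wfun f g δ θ)
      ≤ ∫ θ in x₁..x₂, (f θ * (muG g - psi f θ)
          + δ * (calG g (psiT f x₂ θ) * f θ - (1 - cdf f x₂) * cdf g (psiT f x₂ θ))) := by
    apply intervalIntegral.integral_mono_on h12 iW iRHS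
    intro θ hθ
    exact W_le_integrand hf_int hf_nonneg hf_pos hf_one hg_int hg_nonneg hδ0
      ⟨h1.le.trans hθ.1, hθ.2⟩ h2
  have i4 : (∫ θ in x₁..x₂, (f θ * (muG g - psi f θ)
        + δ * (calG g (psiT f x₂ θ) * f θ - (1 - cdf f x₂) * cdf g (psiT f x₂ θ))))
      = (∫ θ in x₁..x₂, f θ * (muG g - psi f θ))
        + δ * ((∫ θ in x₁..x₂, calG g (psiT f x₂ θ) * f θ)
          - (1 - cdf f x₂) * (∫ θ in x₁..x₂, cdf g (psiT f x₂ θ))) := by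
    rw [intervalIntegral.integral_add iS ((iB2M.sub (iA2M.const_mul _)).const_mul _),
      intervalIntegral.integral_const_mul,
      intervalIntegral.integral_sub iB2M (iA2M.const_mul _),
      intervalIntegral.integral_const_mul]
  -- assemble
  rw [PiD_eq hf_int hf_cont hf_nonneg hf_pos hg_int hpsiT_deriv hθss hx₁ δ,
    PiD_eq hf_int hf_cont hf_nonneg hf_pos hg_int hpsiT_deriv hθss hx₂ δ,
    hAsplit, hBsplit]
  have hF2 : 0 ≤ 1 - cdf f x₂ := by
    have := cdf_le_one hf_int hf_nonneg hf_one h2; linarith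
  have h5 : δ * ((1 - cdf f x₂) * (∫ θ in (0:ℝ)..x₁, cdf g (psiT f x₂ θ)))
      ≤ δ * ((1 - cdf f x₂) * (∫ θ in (0:ℝ)..x₁, cdf g (psiT f x₁ θ))) :=
    mul_le_mul_of_nonneg_left (mul_le_mul_of_nonneg_left i1 hF2) hδ0
  have h6 : δ * ((∫ θ in (0:ℝ)..x₁, calG g (psiT f x₁ θ) * f θ)
        - (cdf f x₂ - cdf f x₁) * (∫ θ in (0:ℝ)..x₁, cdf g (psiT f x₁ θ)))
      ≤ δ * (∫ θ in (0:ℝ)..x₁, calG g (psiT f x₂ θ) * f θ) :=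
    mul_le_mul_of_nonneg_left i2 hδ0
  have h7 : (∫ θ in x₁..x₂, Wfun f g δ θ)
      ≤ (∫ θ in x₁..x₂, f θ * (muG g - psi f θ))
        + δ * ((∫ θ in x₁..x₂, calG g (psiT f x₂ θ) * f θ)
          - (1 - cdf f x₂) * (∫ θ in x₁..x₂, cdf g (psiT f x₂ θ))) := by
    rw [← i4]; exact i3
  nlinarith [h5, h6, h7, hPis]

end Master2


/-- for every discount factor in (0,1), every maximizer of the
dynamic-mechanism profit on [0,1] lies strictly above the unique maximizer p0 of the
ex-ante fixed-price profit (the unique solution of psi(p0) = mu). -/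
theorem stmt10
    (f g : ℝ → ℝ)
    (hf_int : IntegrableOn f (Set.Icc 0 1))
    (hg_int : IntegrableOn g (Set.Icc 0 1))
    (hf_ae : ∀ᵐ t, t ∈ Set.Icc (0:ℝ) 1 → 0 < f t)
    (hg_ae : ∀ᵐ t, t ∈ Set.Icc (0:ℝ) 1 → 0 < g t)
    (hf_one : cdf f 1 = 1)
    (hg_one : cdf g 1 = 1)
    (hg_cont : ContinuousOn g (Set.Icc 0 1))
    (hg_pos : ∀ t ∈ Set.Icc (0:ℝ) 1, 0 < g t)
    (hf_pos : ∀ t ∈ Set.Icc (0:ℝ) 1, 0 < f t)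
    (fd : ℝ → ℝ) (hfd_cont : ContinuousOn fd (Set.Icc 0 1))
    (hf_deriv : ∀ t ∈ Set.Icc (0:ℝ) 1, HasDerivWithinAt f (fd t) (Set.Icc 0 1) t)
    (hpsi_mono : StrictMonoOn (psi f) (Set.Icc 0 1))
    (hpsiT_deriv : ∀ x ∈ Set.Ioc (0:ℝ) 1, ∃ d : ℝ → ℝ, ContinuousOn d (Set.Icc 0 x) ∧
      ∀ θ ∈ Set.Icc (0:ℝ) x, 0 < d θ ∧ HasDerivWithinAt (psiT f x) (d θ) (Set.Icc 0 x) θ)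
    (θs : ℝ) (hθs : θs ∈ Set.Ioo (0:ℝ) 1) (hθs0 : psi f θs = 0)
    (θss : ℝ → ℝ)
    (hθss : ∀ x ∈ Set.Ioc (0:ℝ) 1, θss x ∈ Set.Ioo 0 x ∧ psiT f x (θss x) = 0)
    (p₀ : ℝ) (hp₀ : p₀ ∈ Set.Ioo (0:ℝ) 1) (hp₀psi : psi f p₀ = muG g)
    (hp₀max : ∀ q ∈ Set.Icc (0:ℝ) 1, q ≠ p₀ →
      (1 - cdf f q) * (q - muG g) < (1 - cdf f p₀) * (p₀ - muG g)) :
    ∀ δ ∈ Set.Ioo (0:ℝ) 1, ∀ xs ∈ Set.Icc (0:ℝ) 1,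
      (∀ x ∈ Set.Icc (0:ℝ) 1, PiD f g θss x δ ≤ PiD f g θss xs δ) →
      p₀ < xs := by

  intro δ hδ xs hxs hmax
  have hf_cont : ContinuousOn f (Icc 0 1) := fun t ht => (hf_deriv t ht).continuousWithinAt
  have hf_nonneg : ∀ t ∈ Icc (0:ℝ) 1, 0 ≤ f t := fun t ht => (hf_pos t ht).le
  have hg_nonneg : ∀ t ∈ Icc (0:ℝ) 1, 0 ≤ g t := fun t ht => (hg_pos t ht).le
  have hμeq : muG g = 1 - calG g 1 := muG_eq hg_int hg_cont hg_one
  have hp₀01 : p₀ ∈ Icc (0:ℝ) 1 := ⟨hp₀.1.le, hp₀.2.le⟩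
  -- nonnegativity ingredients for W
  have ha : ∀ θ ∈ Icc (0:ℝ) 1, 0 ≤ f θ * (muG g - θ + calG g θ) := by
    intro θ hθ
    apply mul_nonneg (hf_nonneg θ hθ)
    have h1 : calG g 1 - calG g θ ≤ (1 - θ) * cdf g 1 :=
      calG_sub_le hg_int hg_nonneg hθ.1 hθ.2 le_rfl
    rw [hg_one] at h1
    linarith [hμeq, h1]
  have hb : ∀ θ ∈ Icc (0:ℝ) 1, 0 ≤ (1 - cdf f θ) * (1 - cdf g θ) := by
    intro θ hθ
    apply mul_nonneg
    · linarith [cdf_le_one hf_int hf_nonneg hf_one hθ.2]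
    · linarith [cdf_le_one hg_int hg_nonneg hg_one hθ.2]
  have hc : ∀ θ ∈ Icc (0:ℝ) 1, θ ≤ p₀ → 0 ≤ muG g - psi f θ := by
    intro θ hθ hle
    rcases eq_or_lt_of_le hle with h | h
    · rw [h, hp₀psi]; linarith
    · have := hpsi_mono hθ hp₀01 h
      rw [hp₀psi] at this; linarith
  have hWnonneg : ∀ θ ∈ Icc (0:ℝ) 1, θ ≤ p₀ → 0 ≤ Wfun f g δ θ := by
    intro θ hθ hle
    have h1 := hc θ hθ hle
    have h2 := ha θ hθ
    have h3 := hb θ hθ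
    have h4 := hf_nonneg θ hθ
    simp only [Wfun]
    have hδ0 : (0:ℝ) ≤ δ := hδ.1.le
    have hδ1 : δ ≤ 1 := hδ.2.le
    have t1 : 0 ≤ (1 - δ) * (f θ * (muG g - psi f θ)) :=
      mul_nonneg (by linarith) (mul_nonneg h4 h1)
    have t2 : 0 ≤ δ * (f θ * (muG g - θ + calG g θ) + (1 - cdf f θ) * (1 - cdf g θ)) :=
      mul_nonneg hδ0 (by linarith)
    linarith
  have hWpos : ∀ θ ∈ Icc (0:ℝ) 1, θ < p₀ → 0 < Wfun f g δ θ := by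
    intro θ hθ hlt
    have h1 : psi f θ < muG g := by
      have := hpsi_mono hθ hp₀01 hlt; rw [hp₀psi] at this; exact this
    have h2 := ha θ hθ
    have h3 := hb θ hθ
    have h4 := hf_pos θ hθ
    simp only [Wfun]
    have hδ0 : (0:ℝ) < δ := hδ.1
    have hδ1 : δ < 1 := hδ.2
    have t1 : 0 < (1 - δ) * (f θ * (muG g - psi f θ)) :=
      mul_pos (by linarith) (mul_pos h4 (by linarith))
    have t2 : 0 ≤ δ * (f θ * (muG g - θ + calG g θ) + (1 - cdf f θ) * (1 - cdf g θ)) :=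
      mul_nonneg hδ0.le (by linarith)
    linarith
  have hWp₀pos : 0 < Wfun f g δ p₀ := by
    have h2 := ha p₀ hp₀01
    have h3 : 0 < (1 - cdf f p₀) * (1 - cdf g p₀) := by
      apply mul_pos
      · have := cdf_lt hf_int hf_cont hf_pos hp₀.1.le hp₀.2 le_rfl
        rw [hf_one] at this; linarith
      · have := cdf_lt hg_int hg_cont hg_pos hp₀.1.le hp₀.2 le_rfl
        rw [hg_one] at this; linarith
    have h1 : muG g - psi f p₀ = 0 := by rw [hp₀psi]; ring
    simp only [Wfun, h1, mul_zero, zero_add]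
    exact mul_pos hδ.1 (by linarith)
  by_contra hcon
  push_neg at hcon
  rcases eq_or_lt_of_le hxs.1 with h0 | h0
  · -- xs = 0
    have hPiD0 : PiD f g θss xs δ = -(muG g) := by rw [← h0, PiD]; simp
    have hle := hmax p₀ hp₀01
    rw [hPiD0] at hle
    -- show PiD p₀ > -muG g
    have hp₀Ioc : p₀ ∈ Ioc (0:ℝ) 1 := ⟨hp₀.1, hp₀.2.le⟩
    rw [PiD_eq hf_int hf_cont hf_nonneg hf_pos hg_int hpsiT_deriv hθss hp₀Ioc δ] at hle
    have cA := contA hf_int hf_cont hf_nonneg hf_pos hg_int (g := g) hp₀.2.le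
    have cB := contB hf_int hf_cont hf_nonneg hf_pos hg_int (g := g) hp₀.2.le
    have iA : IntervalIntegrable (fun θ => cdf g (psiT f p₀ θ)) volume 0 p₀ :=
      cA.intervalIntegrable_of_Icc hp₀.1.le
    have iB : IntervalIntegrable (fun θ => calG g (psiT f p₀ θ) * f θ) volume 0 p₀ :=
      cB.intervalIntegrable_of_Icc hp₀.1.le
    have hA_le : (∫ θ in (0:ℝ)..p₀, cdf g (psiT f p₀ θ)) ≤ p₀ := by
      have : (∫ θ in (0:ℝ)..p₀, cdf g (psiT f p₀ θ)) ≤ ∫ _ in (0:ℝ)..p₀, (1:ℝ) := by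
        apply intervalIntegral.integral_mono_on hp₀.1.le iA intervalIntegrable_const
        intro θ hθ
        apply cdf_le_one hg_int hg_nonneg hg_one
        exact le_trans (psiT_le hf_int hf_nonneg hf_pos hθ hp₀.2.le) (hθ.2.trans hp₀.2.le)
      simpa using this
    have hB_ge : 0 ≤ ∫ θ in (0:ℝ)..p₀, calG g (psiT f p₀ θ) * f θ := by
      apply intervalIntegral.integral_nonneg hp₀.1.le
      intro θ hθ
      apply mul_nonneg ?_ (hf_nonneg θ ⟨hθ.1, hθ.2.trans hp₀.2.le⟩)
      apply calG_nonneg hg_int hg_nonneg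
      exact le_trans (psiT_le hf_int hf_nonneg hf_pos hθ hp₀.2.le) (hθ.2.trans hp₀.2.le)
    have hμ0 : 0 ≤ muG g := by
      have : muG g = cdf (fun t => t * g t) 1 := rfl
      rw [this]
      apply cdf_nonneg ?_ le_rfl
      intro t ht
      exact mul_nonneg ht.1 (hg_nonneg t ht)
    have hF1 : cdf f p₀ < 1 := by
      have := cdf_lt hf_int hf_cont hf_pos hp₀.1.le hp₀.2 le_rfl
      rwa [hf_one] at this
    have hF0 : 0 ≤ cdf f p₀ := cdf_nonneg hf_nonneg hp₀.2.le
    have hδ0 : (0:ℝ) < δ := hδ.1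
    have hδ1 : δ < 1 := hδ.2
    have q1 : 0 < (1 - δ) * ((1 - cdf f p₀) * p₀) :=
      mul_pos (by linarith) (mul_pos (by linarith) hp₀.1)
    have q2 : 0 ≤ muG g * cdf f p₀ := mul_nonneg hμ0 hF0
    have q3 : δ * ((1 - cdf f p₀) * ∫ θ in (0:ℝ)..p₀, cdf g (psiT f p₀ θ))
        ≤ δ * ((1 - cdf f p₀) * p₀) :=
      mul_le_mul_of_nonneg_left (mul_le_mul_of_nonneg_left hA_le (by linarith)) hδ0.le
    have q4 : 0 ≤ δ * ∫ θ in (0:ℝ)..p₀, calG g (psiT f p₀ θ) * f θ :=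
      mul_nonneg hδ0.le hB_ge
    nlinarith [q1, q2, q3, q4]
  · rcases eq_or_lt_of_le hcon with h1 | h1
    · -- xs = p₀ : find a point to the right
      have hWc : ContinuousAt (Wfun f g δ) p₀ :=
        ((Wfun_contOn hf_int hf_cont hf_pos hg_int δ) p₀ hp₀01).continuousAt
          (Icc_mem_nhds hp₀.1 hp₀.2)
      have hev : ∀ᶠ θ in nhds p₀, 0 < Wfun f g δ θ := hWc.eventually (eventually_gt_nhds hWp₀pos)
      obtain ⟨ε, hε, hball⟩ := Metric.eventually_nhds_iff.mp hev
      set x₂ := min (p₀ + ε / 2) ((p₀ + 1) / 2) with hx₂def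
      have hx₂gt : p₀ < x₂ := lt_min (by linarith) (by linarith [hp₀.2])
      have hx₂le : x₂ ≤ 1 := le_trans (min_le_right _ _) (by linarith [hp₀.2])
      have iW : IntervalIntegrable (Wfun f g δ) volume p₀ x₂ :=
        ((Wfun_contOn hf_int hf_cont hf_pos hg_int δ).mono
          (Icc_subset_Icc hp₀.1.le hx₂le)).intervalIntegrable_of_Icc hx₂gt.le
      have hpos : 0 < ∫ θ in p₀..x₂, Wfun f g δ θ := by
        apply intervalIntegral.intervalIntegral_pos_of_pos_on iW ?_ hx₂gt
        intro θ hθ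
        apply hball
        rw [Real.dist_eq, abs_of_pos (by linarith [hθ.1])]
        have : x₂ ≤ p₀ + ε / 2 := min_le_left _ _
        linarith [hθ.2]
      have hm := master hf_int hf_cont hf_nonneg hf_pos hf_one hg_int hg_nonneg
        hpsiT_deriv hθss hδ.1.le hp₀.1 hx₂gt.le hx₂le
      have hle := hmax x₂ ⟨by linarith [hp₀.1], hx₂le⟩
      rw [h1] at hle
      linarith
    · -- 0 < xs < p₀
      have hm := master hf_int hf_cont hf_nonneg hf_pos hf_one hg_int hg_nonneg
        hpsiT_deriv hθss hδ.1.le h0 h1.le hp₀.2.le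
      have hle := hmax p₀ hp₀01
      have hpos : 0 < ∫ θ in xs..p₀, Wfun f g δ θ := by
        have iW : IntervalIntegrable (Wfun f g δ) volume xs p₀ :=
          ((Wfun_contOn hf_int hf_cont hf_pos hg_int δ).mono
            (Icc_subset_Icc hxs.1 hp₀.2.le)).intervalIntegrable_of_Icc h1.le
        apply intervalIntegral.intervalIntegral_pos_of_pos_on iW ?_ h1
        intro θ hθ
        exact hWpos θ ⟨(h0.trans hθ.1).le, (hθ.2.trans_le hp₀.2.le).le⟩ hθ.2
      linarith
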